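/- Let Z be normal, A Hermitian with extremal eigenvalues p ≥ q, and B Hermitian with extremal eigenvalues r ≥ s. Then |Tr(|Z|²AB) − Tr(Z*AZB)| ≤ (1/2)(p−q)(r−s)·Tr(|Z|²). -/

import Mathlib

open Matrix ComplexOrder

section helpers
variable {n : ℕ}

lemma trace_re_nonneg' {M : Matrix (Fin n) (Fin n) ℂ} (hM : M.PosSemidef) : 0 ≤ (M.trace).re := by
  have : M.trace = ∑ i, M i i := rfl
  rw [this, Complex.re_sum]
  refine Finset.sum_nonneg fun i _ => ?_
  have := hM.re_dotProduct_nonneg (Pi.single i 1)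
  simpa [dotProduct, mulVec, Pi.single_apply] using this

lemma trace_mul_re_nonneg' {M N : Matrix (Fin n) (Fin n) ℂ} (hM : M.PosSemidef)
    (hN : N.PosSemidef) : 0 ≤ ((M * N).trace).re := by
  obtain ⟨C, rfl⟩ : ∃ C : Matrix (Fin n) (Fin n) ℂ, M = Cᴴ * C := by
    open MatrixOrder in exact CStarAlgebra.nonneg_iff_eq_star_mul_self.mp hM.nonneg
  rw [mul_assoc, trace_mul_comm]
  exact trace_re_nonneg' (by simpa [mul_assoc] using hN.mul_mul_conjTranspose_same C)

lemma trace_mul_le' {M N : Matrix (Fin n) (Fin n) ℂ} (hM : M.PosSemidef) (k : ℝ)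
    (hN : ((k:ℂ) • 1 - N).PosSemidef) : ((M * N).trace).re ≤ k * (M.trace).re := by
  have h := trace_mul_re_nonneg' hM hN
  rw [mul_sub, trace_sub, mul_smul_comm, mul_one, trace_smul] at h
  simp only [Complex.sub_re, smul_eq_mul, Complex.mul_re, Complex.ofReal_re,
    Complex.ofReal_im, zero_mul, sub_zero] at h
  linarith

lemma shift_sq_psd' {A : Matrix (Fin n) (Fin n) ℂ} (hA : A.IsHermitian) (p q : ℝ)
    (hub : ∀ i, hA.eigenvalues i ≤ p) (hlb : ∀ i, q ≤ hA.eigenvalues i) :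
    (((((p-q)/2)^2 : ℝ) : ℂ) • 1 -
      (A - (((p+q)/2 : ℝ) : ℂ) • 1) * (A - (((p+q)/2 : ℝ) : ℂ) • 1)).PosSemidef := by
  set U : Matrix (Fin n) (Fin n) ℂ := (hA.eigenvectorUnitary : Matrix (Fin n) (Fin n) ℂ) with hUdef
  have hU : U * star U = 1 := (Matrix.mem_unitaryGroup_iff).mp hA.eigenvectorUnitary.2
  have hU' : star U * U = 1 := (Matrix.mem_unitaryGroup_iff').mp hA.eigenvectorUnitary.2
  have assoc : ∀ D1 D2 : Matrix (Fin n) (Fin n) ℂ,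
      U * D1 * star U * (U * D2 * star U) = U * (D1 * D2) * star U := by
    intro D1 D2
    rw [mul_assoc (U * D1) (star U), ← mul_assoc (star U) (U * D2) (star U),
      ← mul_assoc (star U) U D2, hU', one_mul, ← mul_assoc (U * D1) D2 (star U),
      mul_assoc U D1 D2]
  have hUc : ∀ (c:ℝ), ((c:ℂ)) • (1 : Matrix (Fin n) (Fin n) ℂ)
      = U * diagonal (fun _ => (c:ℂ)) * star U := by
    intro c
    rw [← smul_one_eq_diagonal, mul_smul_comm, mul_one, smul_mul_assoc, hU]
  have key : ((((p-q)/2)^2 : ℝ) : ℂ) • 1 -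
      (A - (((p+q)/2 : ℝ) : ℂ) • 1) * (A - (((p+q)/2 : ℝ) : ℂ) • 1)
      = U * diagonal (fun i => ((((p-q)/2)^2 - (hA.eigenvalues i - (p+q)/2)^2 : ℝ) : ℂ)) * star U := by
    conv_lhs => rw [hA.spectral_theorem, Unitary.conjStarAlgAut_apply, hUc ((p+q)/2), hUc (((p-q)/2)^2)]
    rw [← hUdef, ← sub_mul, ← mul_sub U, assoc, ← sub_mul, ← mul_sub U, diagonal_sub,
      diagonal_mul_diagonal, diagonal_sub]
    congr 1
    congr 1
    funext i
    simp only [Function.comp_apply]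
    push_cast
    ring_nf
    rfl
  rw [key]
  have hd : (PosSemidef (diagonal (fun i => ((((p-q)/2)^2 - (hA.eigenvalues i - (p+q)/2)^2 : ℝ) : ℂ)))) := by
    refine PosSemidef.diagonal fun i => ?_
    simp only [Pi.zero_apply]
    rw [Complex.zero_le_real]
    nlinarith [hub i, hlb i]
  simpa [star_eq_conjTranspose] using hd.mul_mul_conjTranspose_same U

lemma trace_inner_eq' (X Y : Matrix (Fin n) (Fin n) ℂ) :
    (Xᴴ * Y).trace = ∑ p : Fin n × Fin n, (starRingEnd ℂ) (X p.1 p.2) * Y p.1 p.2 := by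
  rw [Fintype.sum_prod_type]
  simp only [trace, diag, mul_apply, conjTranspose_apply, starRingEnd_apply]
  rw [Finset.sum_comm]

lemma trace_cs' (X Y : Matrix (Fin n) (Fin n) ℂ) :
    ‖(Xᴴ * Y).trace‖ ≤
      Real.sqrt (((Xᴴ * X).trace).re) * Real.sqrt (((Yᴴ * Y).trace).re) := by
  classical
  let toE : Matrix (Fin n) (Fin n) ℂ → EuclideanSpace ℂ (Fin n × Fin n) :=
    fun W => WithLp.toLp 2 (fun p : Fin n × Fin n => W p.1 p.2)
  have inner_eq : ∀ W V : Matrix (Fin n) (Fin n) ℂ,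
      (Wᴴ * V).trace = inner (𝕜 := ℂ) (toE W) (toE V) := by
    intro W V
    rw [trace_inner_eq', PiLp.inner_apply]
    refine Finset.sum_congr rfl fun i _ => ?_
    simp [toE, mul_comm]
  have h2 : ∀ W : Matrix (Fin n) (Fin n) ℂ, ((Wᴴ * W).trace).re = ‖toE W‖^2 := by
    intro W
    rw [inner_eq W W, ← inner_self_eq_norm_sq (𝕜 := ℂ)]
    rfl
  rw [inner_eq X Y, h2 X, h2 Y, Real.sqrt_sq (norm_nonneg _), Real.sqrt_sq (norm_nonneg _)]
  exact norm_inner_le_norm (𝕜 := ℂ) _ _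

variable {n : ℕ} in
lemma cyc1 (Z P Q : Matrix (Fin n) (Fin n) ℂ) :
    ((Z*P*Q)ᴴ * (Z*P*Q)).trace = ((Pᴴ * (Zᴴ*Z) * P) * (Q*Qᴴ)).trace := by
  rw [conjTranspose_mul, conjTranspose_mul, mul_assoc Qᴴ, trace_mul_comm]
  simp only [← mul_assoc]

lemma cyc2 (Z P : Matrix (Fin n) (Fin n) ℂ) :
    ((P*Z)ᴴ * (P*Z)).trace = ((Z*Zᴴ) * (Pᴴ*P)).trace := by
  rw [conjTranspose_mul, mul_assoc Zᴴ Pᴴ (P*Z), trace_mul_comm]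
  rw [show Pᴴ*(P*Z)*Zᴴ = (Pᴴ*P)*(Z*Zᴴ) by simp only [mul_assoc]]
  rw [trace_mul_comm]

lemma cyc3 (Z Q : Matrix (Fin n) (Fin n) ℂ) :
    ((Z*Q)ᴴ * (Z*Q)).trace = ((Zᴴ*Z) * (Q*Qᴴ)).trace := by
  rw [conjTranspose_mul, mul_assoc Qᴴ Zᴴ (Z*Q), trace_mul_comm]
  rw [show Zᴴ*(Z*Q)*Qᴴ = (Zᴴ*Z)*(Q*Qᴴ) by simp only [mul_assoc]]

lemma cyc4 (Z P : Matrix (Fin n) (Fin n) ℂ) :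
    (P * (Zᴴ*Z) * P).trace = ((Zᴴ*Z) * (P*P)).trace := by
  rw [mul_assoc P (Zᴴ*Z) P, trace_mul_comm P ((Zᴴ*Z)*P), mul_assoc (Zᴴ*Z) P P]

end helpers

theorem gruss_trace_normal {n : ℕ} (Z A B : Matrix (Fin n) (Fin n) ℂ)
    (hZ : Zᴴ * Z = Z * Zᴴ) (hA : A.IsHermitian) (hB : B.IsHermitian)
    (p q r s : ℝ)
    (hp : IsGreatest (Set.range hA.eigenvalues) p)
    (hq : IsLeast (Set.range hA.eigenvalues) q)
    (hr : IsGreatest (Set.range hB.eigenvalues) r)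
    (hs : IsLeast (Set.range hB.eigenvalues) s) :
    ‖Matrix.trace (Zᴴ * Z * A * B) - Matrix.trace (Zᴴ * A * Z * B)‖ ≤
      (1 / 2) * (p - q) * (r - s) * (Matrix.trace (Zᴴ * Z)).re := by
  have hpq : q ≤ p := hp.2 hq.1
  have hrs : s ≤ r := hr.2 hs.1
  have hubA : ∀ i, hA.eigenvalues i ≤ p := fun i => hp.2 ⟨i, rfl⟩
  have hlbA : ∀ i, q ≤ hA.eigenvalues i := fun i => hq.2 ⟨i, rfl⟩
  have hubB : ∀ i, hB.eigenvalues i ≤ r := fun i => hr.2 ⟨i, rfl⟩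
  have hlbB : ∀ i, s ≤ hB.eigenvalues i := fun i => hs.2 ⟨i, rfl⟩
  have hA2 := shift_sq_psd' hA p q hubA hlbA
  have hB2 := shift_sq_psd' hB r s hubB hlbB
  set a : ℝ := (p - q)/2 with ha
  set b : ℝ := (r - s)/2 with hb
  have ha0 : 0 ≤ a := by simp [ha]; linarith
  have hb0 : 0 ≤ b := by simp [hb]; linarith
  set A' : Matrix (Fin n) (Fin n) ℂ := A - (((p+q)/2 : ℝ) : ℂ) • 1 with hA'def
  set B' : Matrix (Fin n) (Fin n) ℂ := B - (((r+s)/2 : ℝ) : ℂ) • 1 with hB'def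
  have hA'h : A'ᴴ = A' := by
    rw [hA'def, conjTranspose_sub, hA.eq, conjTranspose_smul, conjTranspose_one]
    simp [Complex.star_def, Complex.conj_ofReal]
  have hB'h : B'ᴴ = B' := by
    rw [hB'def, conjTranspose_sub, hB.eq, conjTranspose_smul, conjTranspose_one]
    simp [Complex.star_def, Complex.conj_ofReal]
  have hPSDZ : (Zᴴ * Z).PosSemidef := posSemidef_conjTranspose_mul_self Z
  set t : ℝ := ((Zᴴ * Z).trace).re with htdef
  have ht0 : 0 ≤ t := trace_re_nonneg' hPSDZ
  -- step A: shift invariance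
  have hcyc : trace (Zᴴ * A' * Z) = trace (Zᴴ * Z * A') := by
    rw [trace_mul_comm, ← mul_assoc, ← hZ]
  have key : trace (Zᴴ * Z * A * B) - trace (Zᴴ * A * Z * B)
      = trace (Zᴴ * Z * A' * B') - trace (Zᴴ * A' * Z * B') := by
    have hAe : A = A' + (((p+q)/2 : ℝ) : ℂ) • 1 := by rw [hA'def]; abel
    have hBe : B = B' + (((r+s)/2 : ℝ) : ℂ) • 1 := by rw [hB'def]; abel
    calc trace (Zᴴ * Z * A * B) - trace (Zᴴ * A * Z * B)
        = trace (Zᴴ * Z * (A' + (((p+q)/2 : ℝ) : ℂ) • 1) * (B' + (((r+s)/2 : ℝ) : ℂ) • 1))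
          - trace (Zᴴ * (A' + (((p+q)/2 : ℝ) : ℂ) • 1) * Z * (B' + (((r+s)/2 : ℝ) : ℂ) • 1)) := by
          rw [← hAe, ← hBe]
      _ = trace (Zᴴ * Z * A' * B') - trace (Zᴴ * A' * Z * B') := by
          simp only [mul_add, add_mul, Matrix.mul_smul, Matrix.smul_mul, mul_one, one_mul,
            trace_add, trace_smul, smul_eq_mul]
          rw [hcyc]
          ring
  rw [key]
  -- PSD facts
  have hS : (A' * (Zᴴ * Z) * A').PosSemidef := by
    have := hPSDZ.mul_mul_conjTranspose_same A'
    rwa [hA'h] at this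
  -- bounds on traces with squares
  have eA : ((Zᴴ * Z) * (A' * A')).trace.re ≤ a^2 * t := by
    refine trace_mul_le' hPSDZ (a^2) ?_
    have : ((a^2 : ℝ) : ℂ) = (((((p-q)/2)^2 : ℝ)) : ℂ) := by rw [ha]
    rw [this]
    exact hA2
  have eB : ((Zᴴ * Z) * (B' * B')).trace.re ≤ b^2 * t := by
    refine trace_mul_le' hPSDZ (b^2) ?_
    have : ((b^2 : ℝ) : ℂ) = (((((r-s)/2)^2 : ℝ)) : ℂ) := by rw [hb]
    rw [this]
    exact hB2
  have eS : (A' * (Zᴴ * Z) * A').trace.re ≤ a^2 * t := by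
    rw [cyc4 Z A']; exact eA
  -- Bound 1
  have bound1 : ‖trace (Zᴴ * Z * A' * B')‖ ≤ a * b * t := by
    have h0 : trace (Zᴴ * Z * A' * B') = trace (Zᴴ * (Z * A' * B')) := by
      simp only [mul_assoc]
    have hI1 : trace ((Z * A' * B')ᴴ * (Z * A' * B')) = ((A' * (Zᴴ * Z) * A') * (B' * B')).trace := by
      have h := cyc1 Z A' B'
      rwa [hA'h, hB'h] at h
    have hinner : ((Z * A' * B')ᴴ * (Z * A' * B')).trace.re ≤ b^2 * (a^2 * t) := by
      rw [hI1]
      calc ((A' * (Zᴴ * Z) * A') * (B' * B')).trace.re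
          ≤ b^2 * (A' * (Zᴴ * Z) * A').trace.re := by
            refine trace_mul_le' hS (b^2) ?_
            have : ((b^2 : ℝ) : ℂ) = (((((r-s)/2)^2 : ℝ)) : ℂ) := by rw [hb]
            rw [this]; exact hB2
        _ ≤ b^2 * (a^2 * t) := by
            exact mul_le_mul_of_nonneg_left eS (by positivity)
    calc ‖trace (Zᴴ * Z * A' * B')‖
        ≤ Real.sqrt (((Zᴴ * Z).trace).re) * Real.sqrt (((Z * A' * B')ᴴ * (Z * A' * B')).trace.re) := by
          rw [h0]; exact trace_cs' Z (Z * A' * B')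
      _ ≤ Real.sqrt t * Real.sqrt (b^2 * (a^2 * t)) := by
          apply mul_le_mul_of_nonneg_left (Real.sqrt_le_sqrt hinner) (Real.sqrt_nonneg _)
      _ = a * b * t := by
          rw [show b^2 * (a^2 * t) = (a*b)^2 * t by ring, Real.sqrt_mul (sq_nonneg _),
            Real.sqrt_sq (by positivity)]
          have hts : Real.sqrt t * Real.sqrt t = t := Real.mul_self_sqrt ht0
          linear_combination (a*b) * hts
  -- Bound 2
  have bound2 : ‖trace (Zᴴ * A' * Z * B')‖ ≤ a * b * t := by
    have h0 : trace (Zᴴ * A' * Z * B') = trace ((A' * Z)ᴴ * (Z * B')) := by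
      rw [conjTranspose_mul, hA'h]
      simp only [mul_assoc]
    have hI4 : ((A' * Z)ᴴ * (A' * Z)).trace = ((Zᴴ * Z) * (A' * A')).trace := by
      have h := cyc2 Z A'
      rwa [hA'h, ← hZ] at h
    have hI5 : ((Z * B')ᴴ * (Z * B')).trace = ((Zᴴ * Z) * (B' * B')).trace := by
      have h := cyc3 Z B'
      rwa [hB'h] at h
    calc ‖trace (Zᴴ * A' * Z * B')‖
        ≤ Real.sqrt (((A' * Z)ᴴ * (A' * Z)).trace.re) * Real.sqrt (((Z * B')ᴴ * (Z * B')).trace.re) := by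
          rw [h0]; exact trace_cs' (A' * Z) (Z * B')
      _ ≤ Real.sqrt (a^2 * t) * Real.sqrt (b^2 * t) := by
          apply mul_le_mul (Real.sqrt_le_sqrt (by rw [hI4]; exact eA))
            (Real.sqrt_le_sqrt (by rw [hI5]; exact eB)) (Real.sqrt_nonneg _) (Real.sqrt_nonneg _)
      _ = a * b * t := by
          rw [Real.sqrt_mul (sq_nonneg a), Real.sqrt_mul (sq_nonneg b),
            Real.sqrt_sq ha0, Real.sqrt_sq hb0]
          have hts : Real.sqrt t * Real.sqrt t = t := Real.mul_self_sqrt ht0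
          linear_combination (a*b) * hts
  calc ‖trace (Zᴴ * Z * A' * B') - trace (Zᴴ * A' * Z * B')‖
      ≤ ‖trace (Zᴴ * Z * A' * B')‖ + ‖trace (Zᴴ * A' * Z * B')‖ := by
        simpa [sub_eq_add_neg] using norm_add_le (trace (Zᴴ * Z * A' * B')) (-(trace (Zᴴ * A' * Z * B')))
    _ ≤ a * b * t + a * b * t := add_le_add bound1 bound2
    _ = (1 / 2) * (p - q) * (r - s) * t := by rw [ha, hb]; ring
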